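/- Let y, λ ∈ ℝ₊^M with y ≠ 0, λ ≠ 0, and supp(y) ⊆ supp(λ); set Y = ‖y‖₁ and Λ = ‖λ‖₁. Let ε > 0 and suppose I(y‖λ) ≤ ε. Define G(z) = (1 + √(2z))·(z + log(1 + √(2z)) − √(2z)) / √(2z) for z > 0. Then |Y − Λ| ≤ √(2εY) + Y·G(2ε/Y). -/

import Mathlib

noncomputable section

/-- ℓ₁ norm of a vector. -/
def l1norm {M : ℕ} (v : Fin M → ℝ) : ℝ := ∑ j, |v j|

/-- I-divergence of nonnegative vectors (with the convention `0 · log 0 = 0`, which holds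
automatically since `Real.log 0 = 0`). -/
def Idiv {M : ℕ} (x y : Fin M → ℝ) : ℝ :=
  ∑ j, (x j * Real.log (x j / y j) + y j - x j)

/-- The auxiliary function `G` from the paper. -/
def Gfun (z : ℝ) : ℝ :=
  (1 + Real.sqrt (2 * z)) * (z + Real.log (1 + Real.sqrt (2 * z)) - Real.sqrt (2 * z)) /
    Real.sqrt (2 * z)

namespace AuxL1Bound

open Real Set

lemma log_lb (t : ℝ) (ht : 0 ≤ t) : t - t^2/2 ≤ Real.log (1+t) := by
  have hder : ∀ x : ℝ, 0 < x → HasDerivAt (fun x : ℝ => Real.log (1+x) - (x - x^2/2))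
      (1/(1+x) - (1 - x)) x := by
    intro x hx
    have h1x : (0:ℝ) < 1 + x := by linarith
    have h1 : HasDerivAt (fun x : ℝ => 1+x) 1 x := by
      simpa using (hasDerivAt_id x).const_add 1
    have h2 := h1.log (ne_of_gt h1x)
    have h3 : HasDerivAt (fun x : ℝ => x - x^2/2) (1 - x) x := by
      have h4 := (hasDerivAt_id x).sub ((hasDerivAt_pow 2 x).div_const 2)
      exact h4.congr_deriv (by norm_num)
    exact (h2.sub h3).congr_deriv (by ring)
  have hmono : MonotoneOn (fun x : ℝ => Real.log (1+x) - (x - x^2/2)) (Set.Ici 0) := by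
    apply monotoneOn_of_deriv_nonneg (convex_Ici 0)
    · apply ContinuousOn.sub
      · exact (Real.continuousOn_log.comp (by fun_prop) (fun x hx => by
          simp only [Set.mem_Ici] at hx; simp; intro h; linarith))
      · fun_prop
    · intro x hx
      rw [interior_Ici] at hx
      exact (hder x hx).differentiableAt.differentiableWithinAt
    · intro x hx
      rw [interior_Ici] at hx
      rw [(hder x hx).deriv]
      have h1x : (0:ℝ) < 1 + x := by linarith [Set.mem_Ioi.1 hx]
      have hx' : 0 < x := hx
      rw [sub_nonneg, le_div_iff₀ h1x]
      nlinarith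
  have := hmono Set.self_mem_Ici (Set.mem_Ici.2 ht) ht
  simpa using this

lemma log_ub (t : ℝ) (ht : 0 ≤ t) : Real.log (1+t) ≤ t - t^2/2 + t^3/3 := by
  have hder : ∀ x : ℝ, 0 < x → HasDerivAt (fun x : ℝ => (x - x^2/2 + x^3/3) - Real.log (1+x))
      ((1 - x + x^2) - 1/(1+x)) x := by
    intro x hx
    have h1x : (0:ℝ) < 1 + x := by linarith
    have h1 : HasDerivAt (fun x : ℝ => 1+x) 1 x := by
      simpa using (hasDerivAt_id x).const_add 1
    have h2 := h1.log (ne_of_gt h1x)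
    have h3 : HasDerivAt (fun x : ℝ => x - x^2/2 + x^3/3) (1 - x + x^2) x := by
      have h4 := ((hasDerivAt_id x).sub ((hasDerivAt_pow 2 x).div_const 2)).add
        ((hasDerivAt_pow 3 x).div_const 3)
      exact h4.congr_deriv (by norm_num)
    exact (h3.sub h2).congr_deriv (by ring)
  have hmono : MonotoneOn (fun x : ℝ => (x - x^2/2 + x^3/3) - Real.log (1+x)) (Set.Ici 0) := by
    apply monotoneOn_of_deriv_nonneg (convex_Ici 0)
    · apply ContinuousOn.sub
      · fun_prop
      · exact (Real.continuousOn_log.comp (by fun_prop) (fun x hx => by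
          simp only [Set.mem_Ici] at hx; simp; intro h; linarith))
    · intro x hx
      rw [interior_Ici] at hx
      exact (hder x hx).differentiableAt.differentiableWithinAt
    · intro x hx
      rw [interior_Ici] at hx
      rw [(hder x hx).deriv]
      have hx' : 0 < x := hx
      have h1x : (0:ℝ) < 1 + x := by linarith
      rw [sub_nonneg, div_le_iff₀ h1x]
      nlinarith
  have := hmono Set.self_mem_Ici (Set.mem_Ici.2 ht) ht
  simp only [pow_succ] at this ⊢
  norm_num at this
  linarith

lemma log_one_sub_ub (w : ℝ) (h0 : 0 ≤ w) (h1 : w < 1) :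
    Real.log (1-w) ≤ -w - w^2/2 := by
  have hder : ∀ x : ℝ, x ∈ Set.Ioo (0:ℝ) 1 →
      HasDerivAt (fun x : ℝ => (-x - x^2/2) - Real.log (1-x))
      ((-1 - x) - (-1)/(1-x)) x := by
    intro x hx
    obtain ⟨hx0, hx1⟩ := hx
    have h1x : (0:ℝ) < 1 - x := by linarith
    have h1 : HasDerivAt (fun x : ℝ => 1-x) (-1) x := by
      simpa using (hasDerivAt_id x).const_sub 1
    have h2 := h1.log (ne_of_gt h1x)
    have h3 : HasDerivAt (fun x : ℝ => -x - x^2/2) (-1 - x) x := by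
      have h4 := ((hasDerivAt_id x).neg).sub ((hasDerivAt_pow 2 x).div_const 2)
      exact h4.congr_deriv (by norm_num)
    exact (h3.sub h2).congr_deriv (by ring)
  have hmono : MonotoneOn (fun x : ℝ => (-x - x^2/2) - Real.log (1-x)) (Set.Ico 0 1) := by
    apply monotoneOn_of_deriv_nonneg (convex_Ico 0 1)
    · apply ContinuousOn.sub
      · fun_prop
      · exact (Real.continuousOn_log.comp (by fun_prop) (fun x hx => by
          obtain ⟨hx0, hx1⟩ := hx; simp; intro h; linarith))
    · intro x hx
      rw [interior_Ico] at hx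
      exact (hder x hx).differentiableAt.differentiableWithinAt
    · intro x hx
      rw [interior_Ico] at hx
      rw [(hder x hx).deriv]
      obtain ⟨hx0, hx1⟩ := hx
      have h1x : (0:ℝ) < 1 - x := by linarith
      rw [sub_nonneg, div_le_iff₀ h1x]
      nlinarith
  have := hmono (Set.mem_Ico.2 ⟨le_refl 0, by norm_num⟩) (Set.mem_Ico.2 ⟨h0, h1⟩) h0
  simp only at this
  norm_num at this
  linarith

/-- The function `F t = (1+t)(t²/2 + log(1+t) - t)/t` is monotone on `(0, ∞)`. -/
lemma Fmono {v u : ℝ} (hv : 0 < v) (hvu : v ≤ u) :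
    (1+v) * (v^2/2 + Real.log (1+v) - v)/v ≤ (1+u) * (u^2/2 + Real.log (1+u) - u)/u := by
  have hder : ∀ x : ℝ, 0 < x →
      HasDerivAt (fun x : ℝ => (1+x) * (x^2/2 + Real.log (1+x) - x)/x)
      ((((x^2/2 + Real.log (1+x) - x) + (1+x) * (x + 1/(1+x) - 1)) * x
        - (1+x) * (x^2/2 + Real.log (1+x) - x) * 1) / x^2) x := by
    intro x hx
    have h1x : (0:ℝ) < 1 + x := by linarith
    have h1 : HasDerivAt (fun x : ℝ => 1+x) 1 x := by
      simpa using (hasDerivAt_id x).const_add 1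
    have hA : HasDerivAt (fun x : ℝ => x^2/2 + Real.log (1+x) - x)
        (x + 1/(1+x) - 1) x := by
      have h2 := h1.log (ne_of_gt h1x)
      have h3 := (((hasDerivAt_pow 2 x).div_const 2).add h2).sub (hasDerivAt_id x)
      exact h3.congr_deriv (by norm_num)
    have hnum : HasDerivAt (fun x : ℝ => (1+x) * (x^2/2 + Real.log (1+x) - x))
        (1 * (x^2/2 + Real.log (1+x) - x) + (1+x) * (x + 1/(1+x) - 1)) x := h1.mul hA
    have := hnum.div (hasDerivAt_id x) (ne_of_gt hx)
    exact this.congr_deriv (by simp only [id_eq]; ring)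
  have hmono : MonotoneOn (fun x : ℝ => (1+x) * (x^2/2 + Real.log (1+x) - x)/x)
      (Set.Ici v) := by
    apply monotoneOn_of_deriv_nonneg (convex_Ici v)
    · intro x hx
      have hx' : 0 < x := lt_of_lt_of_le hv hx
      exact (hder x hx').differentiableAt.continuousAt.continuousWithinAt
    · intro x hx
      rw [interior_Ici] at hx
      have hx' : 0 < x := lt_trans hv hx
      exact (hder x hx').differentiableAt.differentiableWithinAt
    · intro x hx
      rw [interior_Ici] at hx
      have hx' : 0 < x := lt_trans hv hx
      rw [(hder x hx').deriv]
      have h1x : (0:ℝ) < 1 + x := by linarith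
      apply div_nonneg _ (sq_nonneg x)
      have hlog := log_ub x (le_of_lt hx')
      have hexp : ((x^2/2 + Real.log (1+x) - x) + (1+x) * (x + 1/(1+x) - 1)) * x
          - (1+x) * (x^2/2 + Real.log (1+x) - x) * 1
          = x^3 - (x^2/2 + Real.log (1+x) - x) := by
        field_simp
        ring
      rw [hexp]
      nlinarith [pow_pos hx' 3]
  exact hmono (Set.self_mem_Ici) (Set.mem_Ici.2 hvu) hvu

/-- `Gfun z ≥ 0` for `z > 0`. -/
lemma Gfun_nonneg {z : ℝ} (hz : 0 < z) : 0 ≤ Gfun z := by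
  set u := Real.sqrt (2*z) with hu
  have hu0 : 0 < u := Real.sqrt_pos.2 (by linarith)
  have hu2 : u^2 = 2*z := Real.sq_sqrt (by linarith)
  have hlb := log_lb u (le_of_lt hu0)
  unfold Gfun
  rw [← hu]
  apply div_nonneg _ (le_of_lt hu0)
  apply mul_nonneg (by linarith)
  nlinarith

end AuxL1Bound

set_option maxHeartbeats 1000000 in
open AuxL1Bound in
/-- Lemma 3: if `I(y‖λ) ≤ ε` then `|Y − Λ| ≤ √(2εY) + Y·G(2ε/Y)`, where `Y = ‖y‖₁`,
`Λ = ‖λ‖₁`. -/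
theorem l1_total_mass_bound {M : ℕ} (y lam : Fin M → ℝ)
    (hy : ∀ j, 0 ≤ y j) (hlam : ∀ j, 0 ≤ lam j)
    (hy0 : y ≠ 0) (hlam0 : lam ≠ 0)
    (hsupp : ∀ j, lam j = 0 → y j = 0)
    (ε : ℝ) (hε : 0 < ε)
    (h : Idiv y lam ≤ ε) :
    |l1norm y - l1norm lam| ≤
      Real.sqrt (2 * ε * l1norm y) + l1norm y * Gfun (2 * ε / l1norm y) := by
  have hYdef : l1norm y = ∑ j, y j :=
    Finset.sum_congr rfl (fun j _ => abs_of_nonneg (hy j))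
  have hLdef : l1norm lam = ∑ j, lam j :=
    Finset.sum_congr rfl (fun j _ => abs_of_nonneg (hlam j))
  set Y := l1norm y with hYs
  set Λ := l1norm lam with hLs
  have hYpos : 0 < Y := by
    rw [hYdef]
    obtain ⟨j, hj⟩ := Function.ne_iff.1 hy0
    exact Finset.sum_pos' (fun i _ => hy i)
      ⟨j, Finset.mem_univ j, lt_of_le_of_ne (hy j) (by simpa [eq_comm] using hj)⟩
  have hLpos : 0 < Λ := by
    rw [hLdef]
    obtain ⟨j, hj⟩ := Function.ne_iff.1 hlam0
    exact Finset.sum_pos' (fun i _ => hlam i)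
      ⟨j, Finset.mem_univ j, lt_of_le_of_ne (hlam j) (by simpa [eq_comm] using hj)⟩
  have hY0 : Y ≠ 0 := ne_of_gt hYpos
  have hL0 : Λ ≠ 0 := ne_of_gt hLpos
  -- log-sum inequality on totals
  have key1 : Y * Real.log (Y/Λ) + Λ - Y ≤ ε := by
    have hterm : ∀ j, y j * Real.log (Y/Λ) + y j - lam j * (Y/Λ)
        ≤ y j * Real.log (y j / lam j) := by
      intro j
      rcases eq_or_lt_of_le (hy j) with hyj | hyj
      · rw [← hyj]
        have h0 : 0 ≤ lam j * (Y/Λ) := mul_nonneg (hlam j) (div_nonneg hYpos.le hLpos.le)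
        simp only [zero_mul, zero_add, zero_sub]
        linarith
      · have hlj : 0 < lam j := by
          rcases eq_or_lt_of_le (hlam j) with hl | hl
          · exact absurd (hsupp j hl.symm) (ne_of_gt hyj)
          · exact hl
        have hx : 0 < (y j / lam j) / (Y/Λ) := by positivity
        have hlog := Real.one_sub_inv_le_log_of_pos hx
        rw [Real.log_div (by positivity) (by positivity)] at hlog
        have hinv : ((y j / lam j) / (Y/Λ))⁻¹ = (lam j * Y)/(y j * Λ) := by
          field_simp
        rw [hinv] at hlog
        have hmul := mul_le_mul_of_nonneg_left hlog (le_of_lt hyj)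
        have hid : y j * (lam j * Y / (y j * Λ)) = lam j * (Y/Λ) := by
          field_simp
        rw [mul_sub, mul_sub, mul_one, hid] at hmul
        linarith
    have hsum := Finset.sum_le_sum (fun j (_ : j ∈ Finset.univ) => hterm j)
    have hIdiv : Idiv y lam = (∑ j, y j * Real.log (y j / lam j)) + Λ - Y := by
      unfold Idiv
      rw [hYdef, hLdef]
      rw [Finset.sum_sub_distrib, Finset.sum_add_distrib]
    have hlhs : ∑ j, (y j * Real.log (Y/Λ) + y j - lam j * (Y/Λ))
        = Y * Real.log (Y/Λ) + Y - Λ * (Y/Λ) := by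
      rw [Finset.sum_sub_distrib, Finset.sum_add_distrib, ← Finset.sum_mul, ← Finset.sum_mul,
        ← hYdef, ← hLdef]
      try ring
    have hcancel : Λ * (Y/Λ) = Y := by field_simp
    rw [hlhs, hcancel] at hsum
    rw [hIdiv] at h
    linarith
  rcases le_or_gt Λ Y with hcase | hcase
  · -- Λ ≤ Y : Pinsker-type bound
    have habs : |Y - Λ| = Y - Λ := abs_of_nonneg (by linarith)
    have hG : 0 ≤ Y * Gfun (2*ε/Y) :=
      mul_nonneg (le_of_lt hYpos) (Gfun_nonneg (by positivity))
    set w := (Y - Λ)/Y with hw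
    have hw0 : 0 ≤ w := div_nonneg (by linarith) hYpos.le
    have hw1 : w < 1 := by
      rw [hw, div_lt_one hYpos]; linarith
    have hls : Real.log (1-w) ≤ -w - w^2/2 := log_one_sub_ub w hw0 hw1
    have h1w : 1 - w = Λ/Y := by rw [hw]; field_simp; ring
    have hlogYL : Real.log (Y/Λ) = -Real.log (1-w) := by
      rw [h1w, ← Real.log_inv]
      congr 1
      rw [inv_div]
    rw [hlogYL] at key1
    -- ε ≥ -Y log(1-w) + Λ - Y ≥ Y(w + w²/2) - Y w = Y w²/2
    have hLY : Λ - Y = -(Y*w) := by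
      rw [hw]; field_simp; ring
    have hw2 : Y * (w^2/2) ≤ ε := by nlinarith
    have hsq : (Y - Λ)^2 ≤ 2*ε*Y := by
      have : (Y-Λ)^2 = Y^2 * w^2 := by rw [hw]; field_simp
      nlinarith
    have : Y - Λ ≤ Real.sqrt (2*ε*Y) := by
      calc Y - Λ = Real.sqrt ((Y-Λ)^2) := (Real.sqrt_sq (by linarith)).symm
        _ ≤ Real.sqrt (2*ε*Y) := Real.sqrt_le_sqrt hsq
    rw [habs]
    linarith
  · -- Y < Λ
    have habs : |Y - Λ| = Λ - Y := by rw [abs_sub_comm]; exact abs_of_nonneg (by linarith)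
    set s := (Λ - Y)/Y with hs
    have hs0 : 0 < s := div_pos (by linarith) hYpos
    set c := ε/Y with hc
    have hc0 : 0 < c := div_pos hε hYpos
    set v := Real.sqrt (2*c) with hv
    have hv0 : 0 < v := Real.sqrt_pos.2 (by linarith)
    have hv2 : v^2 = 2*c := Real.sq_sqrt (by linarith)
    set z := 2*ε/Y with hz
    have hz0 : 0 < z := by positivity
    set u := Real.sqrt (2*z) with hu
    have hu0 : 0 < u := Real.sqrt_pos.2 (by linarith)
    have hu2 : u^2 = 2*z := Real.sq_sqrt (by linarith)
    have hvu : v ≤ u := by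
      apply Real.sqrt_le_sqrt
      have hcc : 0 < ε/Y := div_pos hε hYpos
      rw [hz, hc]
      rw [show (2:ℝ)*ε/Y = 2*(ε/Y) by ring]
      linarith
    -- g(s) ≤ c
    have h1s : 1 + s = Λ/Y := by rw [hs]; field_simp; ring
    have hgs : s - Real.log (1+s) ≤ c := by
      have hlogYL : Real.log (Y/Λ) = -Real.log (1+s) := by
        rw [h1s, ← Real.log_inv]
        congr 1
        rw [inv_div]
      rw [hlogYL] at key1
      have hLY : Λ - Y = Y*s := by rw [hs]; field_simp
      rw [hc, le_div_iff₀ hYpos]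
      nlinarith
    -- secant bound: s ≤ v + F(v)
    have hsec : Real.log (1+s) - Real.log (1+v) ≤ (s - v)/(1+v) := by
      have hpos : (0:ℝ) < (1+s)/(1+v) := by positivity
      have := Real.log_le_sub_one_of_pos hpos
      rw [Real.log_div (by positivity) (by positivity)] at this
      have heq : (1+s)/(1+v) - 1 = (s-v)/(1+v) := by field_simp; ring
      linarith [heq ▸ this]
    have hsv : s ≤ v + (1+v) * (v^2/2 + Real.log (1+v) - v)/v := by
      have h1v : (0:ℝ) < 1 + v := by linarith
      rw [← sub_nonneg]
      have hkey : v * (v + (1+v) * (v^2/2 + Real.log (1+v) - v)/v - s)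
          = (1+v) * (c - (s - Real.log (1+v) - (s-v)/(1+v))) + (1+v)*(v^2/2 - c) := by
        field_simp
        ring
      have hterm1 : 0 ≤ c - (s - Real.log (1+v) - (s-v)/(1+v)) := by
        have : s - Real.log (1+v) - (s-v)/(1+v) ≤ s - Real.log (1+s) := by linarith
        linarith
      have hterm2 : v^2/2 - c = 0 := by rw [hv2]; ring
      have : 0 ≤ v * (v + (1+v) * (v^2/2 + Real.log (1+v) - v)/v - s) := by
        rw [hkey, hterm2]
        nlinarith
      nlinarith
    have hFvu := Fmono hv0 hvu
    have hGu : Gfun z = (1+u) * (u^2/2 + Real.log (1+u) - u)/u := by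
      unfold Gfun
      rw [← hu, hu2]
      ring_nf
    have hsG : s ≤ v + Gfun z := by
      rw [hGu]; linarith
    -- conclude
    have hYv : Y * v = Real.sqrt (2*ε*Y) := by
      rw [hv, hc]
      have hexp : 2*ε*Y = (2*(ε/Y)) * Y^2 := by field_simp
      rw [hexp, Real.sqrt_mul (show (0:ℝ) ≤ 2*(ε/Y) by positivity) (Y^2),
        Real.sqrt_sq hYpos.le]
      ring
    have hLYs : Λ - Y = Y * s := by rw [hs]; field_simp
    rw [habs, hLYs]
    have := mul_le_mul_of_nonneg_left hsG (le_of_lt hYpos)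
    rw [mul_add, hYv] at this
    exact this
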